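/- If θ₁, φ₁ are i.i.d. from a continuous distribution with cdf F, and p₀ denotes the conditional probability (given θ₁, φ₁) that an independent arc with i.i.d. F endpoints misses the arc [θ₁,φ₁], then p₀ = (1/2)(F(θ₁) − F(φ₁))² if θ₁ > φ₁, and p₀ = (1/2)(F(θ₁) − F(φ₁) + 1)² if θ₁ ≤ φ₁. In particular, applying the probability integral transform, the distribution of p₀ does not depend on F. -/

import Mathlib

open MeasureTheory Set Filter Topology

/-- The anticlockwise arc `[θ, φ]` misses the fixed anticlockwise arc `[θ₁, φ₁]`. -/
def arcMiss (θ₁ φ₁ θ φ : ℝ) : Prop :=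
  if θ₁ ≤ φ₁ then
    (θ < φ ∧ φ < θ₁) ∨ (φ₁ < θ ∧ θ < φ) ∨ (φ < θ₁ ∧ φ₁ < θ)
  else
    (φ₁ < θ ∧ θ < φ ∧ φ < θ₁)

section Aux

variable {μ : Measure ℝ} [IsProbabilityMeasure μ] {F : ℝ → ℝ}

lemma aux_Iic (hF : ∀ x, F x = (μ (Set.Iic x)).toReal) (x : ℝ) :
    μ (Set.Iic x) = ENNReal.ofReal (F x) := by
  rw [hF, ENNReal.ofReal_toReal (measure_ne_top μ _)]

lemma aux_mono (hF : ∀ x, F x = (μ (Set.Iic x)).toReal) : Monotone F := fun a b hab => by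
  rw [hF, hF]
  exact ENNReal.toReal_mono (measure_ne_top μ _) (measure_mono (Set.Iic_subset_Iic.2 hab))

lemma aux_nonneg (hF : ∀ x, F x = (μ (Set.Iic x)).toReal) (x : ℝ) : 0 ≤ F x := by
  rw [hF]; exact ENNReal.toReal_nonneg

lemma aux_le_one (hF : ∀ x, F x = (μ (Set.Iic x)).toReal) (x : ℝ) : F x ≤ 1 := by
  rw [hF]
  have h := prob_le_one (μ := μ) (s := Set.Iic x)
  calc (μ (Set.Iic x)).toReal ≤ (1 : ENNReal).toReal :=
        ENNReal.toReal_mono (by simp) h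
    _ = 1 := by simp

lemma aux_noAtoms (hF : ∀ x, F x = (μ (Set.Iic x)).toReal) (hFc : Continuous F) :
    NullSingletonClass μ := by
  constructor
  intro x
  have key : ∀ y, y < x → μ {x} ≤ ENNReal.ofReal (F x - F y) := by
    intro y hy
    have hsub : {x} ⊆ Set.Ioc y x := by
      intro z hz; rcases hz with rfl; exact ⟨hy, le_rfl⟩
    have hIoc : μ (Set.Ioc y x) = ENNReal.ofReal (F x - F y) := by
      rw [← Set.Iic_sdiff_Iic, measure_diff (Set.Iic_subset_Iic.2 hy.le)
        nullMeasurableSet_Iic (measure_ne_top μ _), aux_Iic hF, aux_Iic hF,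
        ENNReal.ofReal_sub _ (aux_nonneg hF y)]
    exact hIoc ▸ measure_mono hsub
  have hseq : Tendsto (fun n : ℕ => ENNReal.ofReal (F x - F (x - 1 / (n + 1)))) atTop (𝓝 0) := by
    have h1 : Tendsto (fun n : ℕ => x - 1 / ((n : ℝ) + 1)) atTop (𝓝 x) := by
      have := tendsto_one_div_add_atTop_nhds_zero_nat (𝕜 := ℝ)
      have h2 := (tendsto_const_nhds (x := x) (f := atTop (α := ℕ))).sub this
      simpa using h2
    have h3 : Tendsto (fun n : ℕ => F x - F (x - 1 / (n + 1))) atTop (𝓝 0) := by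
      have := ((hFc.tendsto x).comp h1)
      have h4 := (tendsto_const_nhds (x := F x) (f := atTop (α := ℕ))).sub this
      simpa using h4
    have := ENNReal.tendsto_ofReal h3
    simpa using this
  have : μ {x} ≤ 0 := by
    refine ge_of_tendsto hseq (Filter.Eventually.of_forall fun n => ?_)
    apply key
    have : (0 : ℝ) < 1 / ((n : ℝ) + 1) := by positivity
    linarith
  exact le_antisymm this (zero_le)

/-- Half-square lemma: measure of the lower triangle over `s ×ˢ s`. -/
lemma aux_half (μ : Measure ℝ) [IsProbabilityMeasure μ] [NullSingletonClass μ] {s : Set ℝ}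
    (hs : MeasurableSet s) :
    ((μ.prod μ) ({p : ℝ × ℝ | p.1 < p.2} ∩ s ×ˢ s)).toReal = (μ s).toReal ^ 2 / 2 := by
  set T := {p : ℝ × ℝ | p.1 < p.2} ∩ s ×ˢ s with hT
  set T' := {p : ℝ × ℝ | p.2 < p.1} ∩ s ×ˢ s with hT'
  have hTm : MeasurableSet T := measurableSet_lt'.inter (hs.prod hs)
  have hT'm : MeasurableSet T' :=
    (measurableSet_lt measurable_snd measurable_fst).inter (hs.prod hs)
  have hswap : (μ.prod μ) T' = (μ.prod μ) T := by
    have hpre : T' = Prod.swap ⁻¹' T := by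
      ext p
      simp only [hT, hT', Set.mem_inter_iff, Set.mem_setOf_eq, Set.mem_preimage,
        Set.mem_prod, Prod.fst_swap, Prod.snd_swap]
      tauto
    rw [hpre, ← Measure.map_apply measurable_swap hTm, Measure.prod_swap]
  have hDm : MeasurableSet {p : ℝ × ℝ | p.1 = p.2} := by
    have : {p : ℝ × ℝ | p.1 = p.2} = {p : ℝ × ℝ | p.1 ≤ p.2} ∩ {p : ℝ × ℝ | p.2 ≤ p.1} := by
      ext p; simp only [Set.mem_setOf_eq, Set.mem_inter_iff]
      constructor
      · intro h; exact ⟨h.le, h.ge⟩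
      · intro h; exact le_antisymm h.1 h.2
    rw [this]
    exact measurableSet_le'.inter (measurableSet_le measurable_snd measurable_fst)
  have hdiag : (μ.prod μ) {p : ℝ × ℝ | p.1 = p.2} = 0 := by
    rw [Measure.prod_apply hDm]
    have : ∀ x : ℝ, μ (Prod.mk x ⁻¹' {p : ℝ × ℝ | p.1 = p.2}) = 0 := by
      intro x
      have : Prod.mk x ⁻¹' {p : ℝ × ℝ | p.1 = p.2} = {x} := by
        ext y; simp [eq_comm]
      rw [this]; exact measure_singleton x
    simp only [this, lintegral_zero]
  have hunion : (μ.prod μ) (s ×ˢ s) = (μ.prod μ) T + (μ.prod μ) T' := by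
    have hdis : Disjoint T T' := by
      rw [Set.disjoint_left]
      rintro p ⟨hp1, -⟩ ⟨hp2, -⟩
      simp only [Set.mem_setOf_eq] at hp1 hp2
      exact absurd hp2 (not_lt.2 hp1.le)
    rw [← measure_union hdis hT'm]
    apply le_antisymm
    · calc (μ.prod μ) (s ×ˢ s)
          ≤ (μ.prod μ) ((T ∪ T') ∪ {p : ℝ × ℝ | p.1 = p.2}) := by
            apply measure_mono
            intro p hp
            rcases lt_trichotomy p.1 p.2 with h | h | h
            · exact Or.inl (Or.inl ⟨h, hp⟩)
            · exact Or.inr h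
            · exact Or.inl (Or.inr ⟨h, hp⟩)
        _ ≤ (μ.prod μ) (T ∪ T') + (μ.prod μ) {p : ℝ × ℝ | p.1 = p.2} := measure_union_le _ _
        _ = (μ.prod μ) (T ∪ T') := by rw [hdiag, add_zero]
    · exact measure_mono (Set.union_subset Set.inter_subset_right Set.inter_subset_right)
  have hfin : ∀ u : Set (ℝ × ℝ), (μ.prod μ) u ≠ ⊤ := fun u => measure_ne_top _ _
  have hprod : (μ.prod μ) (s ×ˢ s) = μ s * μ s := Measure.prod_prod s s
  have := congrArg ENNReal.toReal hunion
  rw [hswap, hprod, ENNReal.toReal_add (hfin T) (hfin T), ENNReal.toReal_mul] at this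
  rw [pow_two]
  linarith

/-- Probability integral transform. -/
lemma aux_pit (μ : Measure ℝ) [IsProbabilityMeasure μ] (F : ℝ → ℝ)
    (hF : ∀ x, F x = (μ (Set.Iic x)).toReal) (hFc : Continuous F) :
    Measure.map F μ = volume.restrict (Set.Ioc (0 : ℝ) 1) := by
  have hmono : Monotone F := aux_mono hF
  have hFm : Measurable F := hFc.measurable
  have htop : Tendsto F atTop (𝓝 1) := by
    have h1 : Tendsto (fun x : ℝ => μ (Set.Iic x)) atTop (𝓝 (μ Set.univ)) :=
      tendsto_measure_Iic_atTop μ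
    have h2 : Tendsto (fun x : ℝ => (μ (Set.Iic x)).toReal) atTop (𝓝 (μ Set.univ).toReal) :=
      (ENNReal.tendsto_toReal (measure_ne_top μ _)).comp h1
    have : (μ Set.univ).toReal = 1 := by simp
    rw [this] at h2
    have hfe : F = fun x => (μ (Set.Iic x)).toReal := funext hF
    rw [hfe]; exact h2
  have hbot : Tendsto F atBot (𝓝 0) := by
    have hiInter : ⋂ x : ℝ, Set.Iic x = (∅ : Set ℝ) := by
      ext y
      simp only [Set.mem_iInter, Set.mem_Iic, Set.mem_empty_iff_false, iff_false, not_forall]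
      exact ⟨y - 1, by push_neg; linarith⟩
    have h1 : Tendsto (fun x : ℝ => μ (Set.Iic x)) atBot (𝓝 (μ (⋂ x : ℝ, Set.Iic x))) := by
      refine tendsto_measure_iInter_atBot (fun x => (measurableSet_Iic).nullMeasurableSet)
        (fun a b hab => Set.Iic_subset_Iic.2 hab) ⟨0, measure_ne_top μ _⟩
    rw [hiInter] at h1
    simp only [measure_empty] at h1
    have h2 : Tendsto (fun x : ℝ => (μ (Set.Iic x)).toReal) atBot (𝓝 (0 : ENNReal).toReal) :=
      (ENNReal.tendsto_toReal (by simp)).comp h1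
    simp only [ENNReal.toReal_zero] at h2
    have hfe : F = fun x => (μ (Set.Iic x)).toReal := funext hF
    rw [hfe]; exact h2
  refine Measure.ext_of_Iic _ _ (fun t => ?_)
  rw [Measure.map_apply hFm measurableSet_Iic, Measure.restrict_apply measurableSet_Iic]
  have hRHS : Set.Iic t ∩ Set.Ioc (0 : ℝ) 1 = Set.Ioc (0 : ℝ) (min t 1) := by
    ext x
    simp only [Set.mem_inter_iff, Set.mem_Iic, Set.mem_Ioc, le_min_iff]
    tauto
  rw [hRHS, Real.volume_Ioc]
  rcases lt_or_ge t 0 with ht0 | ht0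
  · have hempty : F ⁻¹' Set.Iic t = ∅ := by
      ext x
      simp only [Set.mem_preimage, Set.mem_Iic, Set.mem_empty_iff_false, iff_false, not_le]
      exact lt_of_lt_of_le ht0 (aux_nonneg hF x)
    rw [hempty]
    simp only [measure_empty]
    have hz : min t 1 - 0 ≤ 0 := by simpa using le_trans (min_le_left t 1) ht0.le
    rw [ENNReal.ofReal_eq_zero.2 hz]
  · rcases le_or_gt 1 t with ht1 | ht1
    · have huniv : F ⁻¹' Set.Iic t = Set.univ := by
        ext x
        simp only [Set.mem_preimage, Set.mem_Iic, Set.mem_univ, iff_true]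
        exact le_trans (aux_le_one hF x) ht1
      rw [huniv]
      have : min t 1 = 1 := min_eq_right ht1
      rw [this]
      simp
    · -- 0 ≤ t < 1
      have hmin : min t 1 = t := min_eq_left ht1.le
      rw [hmin, sub_zero]
      have hx1 : ∃ x₁, t < F x₁ := (htop.eventually (eventually_gt_nhds ht1)).exists
      obtain ⟨x₁, hx₁⟩ := hx1
      rcases Set.eq_empty_or_nonempty (F ⁻¹' Set.Iic t) with hS | hS
      · rw [hS]
        have ht00 : t ≤ 0 := by
          refine ge_of_tendsto hbot (Filter.Eventually.of_forall fun x => ?_)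
          by_contra hc
          push_neg at hc
          have hmem : x ∈ F ⁻¹' Set.Iic t := Set.mem_preimage.2 (Set.mem_Iic.2 hc.le)
          rw [hS] at hmem
          exact hmem
        have : t = 0 := le_antisymm ht00 ht0
        simp [this]
      · have hclosed : IsClosed (F ⁻¹' Set.Iic t) := IsClosed.preimage hFc isClosed_Iic
        have hbdd : BddAbove (F ⁻¹' Set.Iic t) := by
          refine ⟨x₁, fun y hy => ?_⟩
          by_contra hc
          push_neg at hc
          exact absurd (le_trans (hmono hc.le) hy) (not_le.2 hx₁)
        set σ := sSup (F ⁻¹' Set.Iic t) with hσ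
        have hσmem : σ ∈ F ⁻¹' Set.Iic t := hclosed.csSup_mem hS hbdd
        have hFσ : F σ = t := by
          refine le_antisymm hσmem ?_
          by_contra hc
          push_neg at hc
          have hev : ∀ᶠ y in 𝓝 σ, F y < t :=
            (hFc.tendsto σ).eventually (eventually_lt_nhds hc)
          have hev2 : ∀ᶠ y in 𝓝[>] σ, F y < t := hev.filter_mono nhdsWithin_le_nhds
          obtain ⟨y, hy1, hy2⟩ := (hev2.and self_mem_nhdsWithin).exists
          have : y ∈ F ⁻¹' Set.Iic t := hy1.le
          exact absurd (le_csSup hbdd this) (not_le.2 hy2)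
        have hSeq : F ⁻¹' Set.Iic t = Set.Iic σ := by
          ext y
          simp only [Set.mem_preimage, Set.mem_Iic]
          constructor
          · intro hy; exact le_csSup hbdd hy
          · intro hy; exact le_trans (hmono hy) (le_of_eq hFσ)
        rw [hSeq, aux_Iic hF, hFσ]

noncomputable def hFun (q : ℝ × ℝ) : ℝ :=
  if q.2 < q.1 then (q.1 - q.2) ^ 2 / 2 else (q.1 - q.2 + 1) ^ 2 / 2

lemma aux_map (μ : Measure ℝ) [IsProbabilityMeasure μ] (F : ℝ → ℝ)
    (hF : ∀ x, F x = (μ (Set.Iic x)).toReal) (hFc : Continuous F) :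
    Measure.map (fun q : ℝ × ℝ =>
        if q.2 < q.1 then (F q.1 - F q.2) ^ 2 / 2 else (F q.1 - F q.2 + 1) ^ 2 / 2)
      (μ.prod μ) =
    Measure.map hFun
      ((volume.restrict (Set.Ioc (0 : ℝ) 1)).prod (volume.restrict (Set.Ioc (0 : ℝ) 1))) := by
  have hmono : Monotone F := aux_mono hF
  have hFm : Measurable F := hFc.measurable
  have hFFm : Measurable (Prod.map F F) := hFm.prodMap hFm
  have hhm : Measurable hFun := by
    apply Measurable.ite (measurableSet_lt measurable_snd measurable_fst)
    · exact ((measurable_fst.sub measurable_snd).pow_const 2).div_const 2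
    · exact (((measurable_fst.sub measurable_snd).add_const 1).pow_const 2).div_const 2
  have hDm : MeasurableSet {p : ℝ × ℝ | p.1 = p.2} := by
    have : {p : ℝ × ℝ | p.1 = p.2} = {p : ℝ × ℝ | p.1 ≤ p.2} ∩ {p : ℝ × ℝ | p.2 ≤ p.1} := by
      ext p; simp only [Set.mem_setOf_eq, Set.mem_inter_iff]
      constructor
      · intro h; exact ⟨h.le, h.ge⟩
      · intro h; exact le_antisymm h.1 h.2
    rw [this]
    exact measurableSet_le'.inter (measurableSet_le measurable_snd measurable_fst)
  have hpit := aux_pit μ F hF hFc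
  have hnull : (μ.prod μ) ((Prod.map F F) ⁻¹' {p : ℝ × ℝ | p.1 = p.2}) = 0 := by
    rw [← Measure.map_apply hFFm hDm, ← Measure.map_prod_map _ _ hFm hFm, hpit]
    set u := volume.restrict (Set.Ioc (0 : ℝ) 1)
    rw [Measure.prod_apply hDm]
    have : ∀ x : ℝ, u (Prod.mk x ⁻¹' {p : ℝ × ℝ | p.1 = p.2}) = 0 := by
      intro x
      have : Prod.mk x ⁻¹' {p : ℝ × ℝ | p.1 = p.2} = {x} := by
        ext y; simp [eq_comm]
      rw [this]; exact measure_singleton x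
    simp only [this, lintegral_zero]
  have hae : (fun q : ℝ × ℝ =>
      if q.2 < q.1 then (F q.1 - F q.2) ^ 2 / 2 else (F q.1 - F q.2 + 1) ^ 2 / 2)
      =ᵐ[μ.prod μ] (hFun ∘ Prod.map F F) := by
    refine measure_mono_null ?_ hnull
    intro q hq
    simp only [Set.mem_setOf_eq] at hq
    simp only [Set.mem_preimage, Set.mem_setOf_eq, Prod.map_fst, Prod.map_snd]
    by_contra hne
    apply hq
    show _ = hFun (F q.1, F q.2)
    unfold hFun
    rcases lt_or_ge q.2 q.1 with h | h
    · have hle : F q.2 ≤ F q.1 := hmono h.le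
      have hlt : F q.2 < F q.1 := lt_of_le_of_ne hle (fun hc => hne hc.symm)
      rw [if_pos h, if_pos hlt]
    · have hle : F q.1 ≤ F q.2 := hmono h
      rw [if_neg (not_lt.2 h), if_neg (not_lt.2 hle)]
  rw [Measure.map_congr hae, ← Measure.map_map hhm hFFm,
    ← Measure.map_prod_map _ _ hFm hFm, hpit]

end Aux

theorem stmt_7 (μ ν : Measure ℝ) [IsProbabilityMeasure μ] [IsProbabilityMeasure ν]
    (F G : ℝ → ℝ)
    (hF : ∀ x, F x = (μ (Set.Iic x)).toReal) (hG : ∀ x, G x = (ν (Set.Iic x)).toReal)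
    (hFc : Continuous F) (hGc : Continuous G) :
    (∀ θ₁ φ₁ : ℝ,
      ((μ.prod μ) {p : ℝ × ℝ | arcMiss θ₁ φ₁ p.1 p.2}).toReal =
        if φ₁ < θ₁ then (F θ₁ - F φ₁) ^ 2 / 2 else (F θ₁ - F φ₁ + 1) ^ 2 / 2) ∧
    Measure.map (fun q : ℝ × ℝ =>
        if q.2 < q.1 then (F q.1 - F q.2) ^ 2 / 2 else (F q.1 - F q.2 + 1) ^ 2 / 2)
      (μ.prod μ) =
    Measure.map (fun q : ℝ × ℝ =>
        if q.2 < q.1 then (G q.1 - G q.2) ^ 2 / 2 else (G q.1 - G q.2 + 1) ^ 2 / 2)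
      (ν.prod ν) := by
  have hna : NullSingletonClass μ := aux_noAtoms hF hFc
  constructor
  · intro θ₁ φ₁
    rcases le_or_gt θ₁ φ₁ with h | h
    · -- θ₁ ≤ φ₁ case
      rw [if_neg (not_lt.2 h)]
      have hset : {p : ℝ × ℝ | arcMiss θ₁ φ₁ p.1 p.2} =
          ({p : ℝ × ℝ | p.1 < p.2} ∩ Set.Iio θ₁ ×ˢ Set.Iio θ₁) ∪
          (({p : ℝ × ℝ | p.1 < p.2} ∩ Set.Ioi φ₁ ×ˢ Set.Ioi φ₁) ∪
           (Set.Ioi φ₁ ×ˢ Set.Iio θ₁)) := by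
        ext p
        simp only [arcMiss, if_pos h, Set.mem_setOf_eq, Set.mem_union, Set.mem_inter_iff,
          Set.mem_prod, Set.mem_Iio, Set.mem_Ioi]
        constructor
        · rintro (⟨h1, h2⟩ | ⟨h1, h2⟩ | ⟨h1, h2⟩)
          · exact Or.inl ⟨h1, lt_trans h1 h2, h2⟩
          · exact Or.inr (Or.inl ⟨h2, h1, lt_trans h1 h2⟩)
          · exact Or.inr (Or.inr ⟨h2, h1⟩)
        · rintro (⟨h1, -, h2⟩ | ⟨h1, h2, -⟩ | ⟨h1, h2⟩)
          · exact Or.inl ⟨h1, h2⟩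
          · exact Or.inr (Or.inl ⟨h2, h1⟩)
          · exact Or.inr (Or.inr ⟨h2, h1⟩)
      rw [hset]
      have hAm : MeasurableSet ({p : ℝ × ℝ | p.1 < p.2} ∩ Set.Iio θ₁ ×ˢ Set.Iio θ₁) :=
        measurableSet_lt'.inter (measurableSet_Iio.prod measurableSet_Iio)
      have hBm : MeasurableSet ({p : ℝ × ℝ | p.1 < p.2} ∩ Set.Ioi φ₁ ×ˢ Set.Ioi φ₁) :=
        measurableSet_lt'.inter (measurableSet_Ioi.prod measurableSet_Ioi)
      have hCm : MeasurableSet ((Set.Ioi φ₁ ×ˢ Set.Iio θ₁ : Set (ℝ × ℝ))) :=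
        measurableSet_Ioi.prod measurableSet_Iio
      have hdisBC : Disjoint ({p : ℝ × ℝ | p.1 < p.2} ∩ Set.Ioi φ₁ ×ˢ Set.Ioi φ₁)
          (Set.Ioi φ₁ ×ˢ Set.Iio θ₁ : Set (ℝ × ℝ)) := by
        rw [Set.disjoint_left]
        rintro p ⟨h1, -, h2⟩ ⟨-, h3⟩
        simp only [Set.mem_setOf_eq] at h1
        simp only [Set.mem_Ioi] at h2
        simp only [Set.mem_Iio] at h3
        exact absurd (lt_trans (lt_of_le_of_lt h h2) h3) (lt_irrefl θ₁)
      have hdisA : Disjoint ({p : ℝ × ℝ | p.1 < p.2} ∩ Set.Iio θ₁ ×ˢ Set.Iio θ₁)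
          (({p : ℝ × ℝ | p.1 < p.2} ∩ Set.Ioi φ₁ ×ˢ Set.Ioi φ₁) ∪
           (Set.Ioi φ₁ ×ˢ Set.Iio θ₁)) := by
        rw [Set.disjoint_left]
        rintro p ⟨h1, h2, -⟩ hp
        simp only [Set.mem_Iio] at h2
        have hple : p.1 < φ₁ := lt_of_lt_of_le h2 h
        rcases hp with ⟨-, h3, -⟩ | ⟨h3, -⟩
        · simp only [Set.mem_Ioi] at h3; exact absurd (lt_trans hple h3) (lt_irrefl p.1)
        · simp only [Set.mem_Ioi] at h3; exact absurd (lt_trans hple h3) (lt_irrefl p.1)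
      rw [measure_union hdisA (hBm.union hCm), measure_union hdisBC hCm,
        ENNReal.toReal_add (measure_ne_top _ _) (by
          exact (ENNReal.add_ne_top.2 ⟨measure_ne_top _ _, measure_ne_top _ _⟩)),
        ENNReal.toReal_add (measure_ne_top _ _) (measure_ne_top _ _)]
      have e1 := aux_half μ (measurableSet_Iio (a := θ₁))
      have e2 := aux_half μ (measurableSet_Ioi (a := φ₁))
      rw [e1, e2, Measure.prod_prod, ENNReal.toReal_mul]
      have hIio : (μ (Set.Iio θ₁)).toReal = F θ₁ := by
        rw [measure_congr (Iio_ae_eq_Iic (μ := μ) (a := θ₁)), hF]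
      have hIoi : (μ (Set.Ioi φ₁)).toReal = 1 - F φ₁ := by
        rw [← Set.compl_Iic, measure_compl measurableSet_Iic (measure_ne_top μ _),
          measure_univ, ENNReal.toReal_sub_of_le prob_le_one ENNReal.one_ne_top, hF]
        simp
      rw [hIio, hIoi]
      ring
    · -- φ₁ < θ₁ case
      rw [if_pos h]
      have hset : {p : ℝ × ℝ | arcMiss θ₁ φ₁ p.1 p.2} =
          {p : ℝ × ℝ | p.1 < p.2} ∩ Set.Ioo φ₁ θ₁ ×ˢ Set.Ioo φ₁ θ₁ := by
        ext p
        simp only [arcMiss, if_neg (not_le.2 h), Set.mem_setOf_eq, Set.mem_inter_iff,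
          Set.mem_prod, Set.mem_Ioo]
        constructor
        · rintro ⟨h1, h2, h3⟩
          exact ⟨h2, ⟨h1, lt_trans h2 h3⟩, lt_trans h1 h2, h3⟩
        · rintro ⟨h1, ⟨h2, -⟩, -, h3⟩
          exact ⟨h2, h1, h3⟩
      rw [hset, aux_half μ measurableSet_Ioo]
      have hIoo : (μ (Set.Ioo φ₁ θ₁)).toReal = F θ₁ - F φ₁ := by
        rw [measure_congr (Ioo_ae_eq_Ioc (μ := μ) (a := φ₁) (b := θ₁)),
          ← Set.Iic_sdiff_Iic, measure_diff (Set.Iic_subset_Iic.2 h.le)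
          nullMeasurableSet_Iic (measure_ne_top μ _),
          ENNReal.toReal_sub_of_le (measure_mono (Set.Iic_subset_Iic.2 h.le))
          (measure_ne_top μ _), hF, hF]
      rw [hIoo]
  · rw [aux_map μ F hF hFc, aux_map ν G hG hGc]
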